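/- The efficient influence function has mean zero under the true distribution: E[ φ_t(P)(X,T,Y) ] = 0; equivalently, E[ ν_t(P)(X,T,Y) ] = ψ_t(P). -/

import Mathlib

open MeasureTheory Real Filter

section helpers
set_option linter.unusedSectionVars false

variable {Ω : Type*} {m : MeasurableSpace Ω} [m0 : MeasurableSpace Ω] {μ : Measure Ω}
  [IsProbabilityMeasure μ]

lemma int_mul_bdd {h b : Ω → ℝ} (hh : Integrable h μ) (hb : AEStronglyMeasurable b μ)
    {c : ℝ} (hbc : ∀ᵐ ω ∂μ, ‖b ω‖ ≤ c) : Integrable (fun ω => h ω * b ω) μ :=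
  (hh.bdd_mul hb hbc).congr (Filter.Eventually.of_forall fun ω => mul_comm _ _)

lemma tower_bdd (hm : m ≤ m0) {g W : Ω → ℝ} (hg : StronglyMeasurable[m] g)
    (hgW : Integrable (fun ω => g ω * W ω) μ) (hW : Integrable W μ) :
    ∫ ω, g ω * W ω ∂μ = ∫ ω, g ω * (μ[W|m]) ω ∂μ := by
  have h := condExp_mul_of_stronglyMeasurable_left hg (by exact hgW) hW
  calc ∫ ω, g ω * W ω ∂μ = ∫ ω, (μ[fun ω => g ω * W ω|m]) ω ∂μ := (integral_condExp hm).symm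
    _ = ∫ ω, g ω * (μ[W|m]) ω ∂μ := integral_congr_ae (by
        filter_upwards [h] with ω hω using hω)

private lemma sm_min_abs {Ω : Type*} [MeasurableSpace Ω] {g : Ω → ℝ}
    (hg : StronglyMeasurable g) (n : ℕ) :
    StronglyMeasurable (fun ω => min |g ω| (n:ℝ)) :=
  (hg.measurable.abs.min measurable_const).stronglyMeasurable

private lemma sm_trunc {Ω : Type*} [MeasurableSpace Ω] {g : Ω → ℝ}
    (hg : StronglyMeasurable g) (n : ℕ) :
    StronglyMeasurable (fun ω => max (min (g ω) (n:ℝ)) (-(n:ℝ))) :=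
  ((hg.measurable.min measurable_const).max measurable_const).stronglyMeasurable

private lemma trunc_abs_le (g : ℝ) (n : ℕ) : |max (min g n) (-(n:ℝ))| ≤ |g| := by
  rw [abs_le]
  constructor
  · refine le_max_of_le_left (le_min (neg_abs_le g) ?_)
    exact le_trans (neg_nonpos.2 (abs_nonneg g)) (Nat.cast_nonneg n)
  · refine max_le (le_trans (min_le_left _ _) (le_abs_self g)) ?_
    exact le_trans (neg_nonpos.2 (Nat.cast_nonneg n)) (abs_nonneg g)

private lemma trunc_eventually_eq (g : ℝ) : ∀ᶠ n : ℕ in atTop, max (min g n) (-(n:ℝ)) = g := by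
  filter_upwards [eventually_ge_atTop ⌈|g|⌉₊] with n hn
  have h1 : |g| ≤ (n : ℝ) := le_trans (Nat.le_ceil _) (Nat.cast_le.2 hn)
  rw [min_eq_left (le_trans (le_abs_self g) h1),
    max_eq_left (le_trans (neg_le_neg h1) (neg_abs_le g))]

lemma tower_nonneg (hm : m ≤ m0) {g W : Ω → ℝ} (hg : StronglyMeasurable[m] g)
    (hW : Integrable W μ) (hW0 : 0 ≤ᵐ[μ] W)
    (hint : Integrable (fun ω => |g ω| * (μ[W|m]) ω) μ) :
    Integrable (fun ω => g ω * W ω) μ ∧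
      ∫ ω, g ω * W ω ∂μ = ∫ ω, g ω * (μ[W|m]) ω ∂μ := by
  have hcW0 : 0 ≤ᵐ[μ] μ[W|m] := condExp_nonneg hW0
  have hgsm : StronglyMeasurable g := hg.mono hm
  have hminm : ∀ n : ℕ, StronglyMeasurable[m] (fun ω => min |g ω| (n:ℝ)) :=
    fun n => @sm_min_abs Ω m _ hg n
  have hminb : ∀ (n : ℕ) ω, ‖min |g ω| (n:ℝ)‖ ≤ (n:ℝ) := by
    intro n ω
    rw [Real.norm_eq_abs, abs_of_nonneg (le_min (abs_nonneg _) (Nat.cast_nonneg n))]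
    exact min_le_right _ _
  have hGn : ∀ n : ℕ, Integrable (fun ω => min |g ω| (n:ℝ) * W ω) μ := fun n =>
    hW.bdd_mul ((hminm n).mono hm).aestronglyMeasurable
      (Filter.Eventually.of_forall (hminb n))
  have hGncW : ∀ n : ℕ, Integrable (fun ω => min |g ω| (n:ℝ) * (μ[W|m]) ω) μ := fun n =>
    integrable_condExp.bdd_mul ((hminm n).mono hm).aestronglyMeasurable
      (Filter.Eventually.of_forall (hminb n))
  have key : ∀ n : ℕ, ∫⁻ ω, ENNReal.ofReal (min |g ω| (n:ℝ) * W ω) ∂μ ≤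
      ENNReal.ofReal (∫ ω, |g ω| * (μ[W|m]) ω ∂μ) := by
    intro n
    have hnn : 0 ≤ᵐ[μ] fun ω => min |g ω| (n:ℝ) * W ω := by
      filter_upwards [hW0] with ω hω
      exact mul_nonneg (le_min (abs_nonneg _) (Nat.cast_nonneg n)) hω
    rw [← ofReal_integral_eq_lintegral_ofReal (hGn n) hnn,
      tower_bdd hm (hminm n) (hGn n) hW]
    refine ENNReal.ofReal_le_ofReal (integral_mono_ae (hGncW n) hint ?_)
    filter_upwards [hcW0] with ω hω
    exact mul_le_mul_of_nonneg_right (min_le_left _ _) hω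
  -- integrability of g * W
  have hsup : ∀ᵐ ω ∂μ, (⨆ n : ℕ, ENNReal.ofReal (min |g ω| (n:ℝ) * W ω)) =
      ENNReal.ofReal (|g ω| * W ω) := by
    filter_upwards [hW0] with ω hω
    have hmono : Monotone fun n : ℕ => ENNReal.ofReal (min |g ω| (n:ℝ) * W ω) := by
      intro a b hab
      exact ENNReal.ofReal_le_ofReal (mul_le_mul_of_nonneg_right
        (min_le_min le_rfl (Nat.cast_le.2 hab)) hω)
    refine tendsto_nhds_unique (tendsto_atTop_iSup hmono) ?_
    refine Tendsto.congr' ?_ tendsto_const_nhds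
    filter_upwards [eventually_ge_atTop ⌈|g ω|⌉₊] with n hn
    rw [min_eq_left (le_trans (Nat.le_ceil _) (Nat.cast_le.2 hn))]
  have hfin : HasFiniteIntegral (fun ω => g ω * W ω) μ := by
    rw [hasFiniteIntegral_iff_norm]
    have heq : ∫⁻ ω, ENNReal.ofReal ‖g ω * W ω‖ ∂μ =
        ∫⁻ ω, (⨆ n : ℕ, ENNReal.ofReal (min |g ω| (n:ℝ) * W ω)) ∂μ := by
      refine lintegral_congr_ae ?_
      filter_upwards [hsup, hW0] with ω h1 h2
      rw [h1, Real.norm_eq_abs, abs_mul, abs_of_nonneg h2]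
    rw [heq, lintegral_iSup' (f := fun n ω => ENNReal.ofReal (min |g ω| (n:ℝ) * W ω)) (fun n => (((hminm n).mono hm).measurable.aemeasurable.mul
      hW.aemeasurable).ennreal_ofReal) ?_]
    · exact lt_of_le_of_lt (iSup_le key) ENNReal.ofReal_lt_top
    · filter_upwards [hW0] with ω hω
      intro a b hab
      exact ENNReal.ofReal_le_ofReal (mul_le_mul_of_nonneg_right
        (min_le_min le_rfl (Nat.cast_le.2 hab)) hω)
  have hgW_int : Integrable (fun ω => g ω * W ω) μ :=
    ⟨hgsm.aestronglyMeasurable.mul hW.aestronglyMeasurable, hfin⟩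
  refine ⟨hgW_int, ?_⟩
  -- equality via dominated convergence on both sides
  set tr : ℕ → Ω → ℝ := fun n ω => max (min (g ω) n) (-(n:ℝ)) with htr
  have htrm : ∀ n, StronglyMeasurable[m] (tr n) := fun n => @sm_trunc Ω m _ hg n
  have htrb : ∀ (n : ℕ) ω, ‖tr n ω‖ ≤ (n : ℝ) := by
    intro n ω
    rw [Real.norm_eq_abs, abs_le]
    exact ⟨le_max_right _ _, max_le (le_trans (min_le_right _ _) le_rfl)
      (le_trans (neg_nonpos.2 (Nat.cast_nonneg n)) (Nat.cast_nonneg n))⟩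
  have htrW_int : ∀ n, Integrable (fun ω => tr n ω * W ω) μ := fun n =>
    hW.bdd_mul ((htrm n).mono hm).aestronglyMeasurable
      (Filter.Eventually.of_forall (htrb n))
  have htend : ∀ ω, Tendsto (fun n => tr n ω) atTop (nhds (g ω)) := by
    intro ω
    refine Tendsto.congr' ?_ tendsto_const_nhds
    filter_upwards [trunc_eventually_eq (g ω)] with n hn using hn.symm
  have h1 : Tendsto (fun n => ∫ ω, tr n ω * W ω ∂μ) atTop (nhds (∫ ω, g ω * W ω ∂μ)) := by
    refine tendsto_integral_of_dominated_convergence (fun ω => |g ω| * |W ω|)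
      (fun n => (htrW_int n).aestronglyMeasurable) (hgW_int.abs.congr ?_) ?_ ?_
    · exact Filter.Eventually.of_forall fun ω => by simp [abs_mul]
    · intro n
      exact Filter.Eventually.of_forall fun ω => by
        simp only [Real.norm_eq_abs, abs_mul]
        exact mul_le_mul_of_nonneg_right (trunc_abs_le (g ω) n) (abs_nonneg _)
    · exact Filter.Eventually.of_forall fun ω => (htend ω).mul_const _
  have hintabs : Integrable (fun ω => |g ω| * |(μ[W|m]) ω|) μ := by
    refine hint.congr ?_
    filter_upwards [hcW0] with ω hω
    rw [abs_of_nonneg hω]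
  have h2 : Tendsto (fun n => ∫ ω, tr n ω * (μ[W|m]) ω ∂μ) atTop
      (nhds (∫ ω, g ω * (μ[W|m]) ω ∂μ)) := by
    refine tendsto_integral_of_dominated_convergence (fun ω => |g ω| * |(μ[W|m]) ω|)
      (fun n => (((htrm n).mono hm).aestronglyMeasurable.mul
        integrable_condExp.aestronglyMeasurable)) hintabs ?_ ?_
    · intro n
      exact Filter.Eventually.of_forall fun ω => by
        simp only [Real.norm_eq_abs, abs_mul]
        exact mul_le_mul_of_nonneg_right (trunc_abs_le (g ω) n) (abs_nonneg _)
    · exact Filter.Eventually.of_forall fun ω => (htend ω).mul_const _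
  have h12 : ∀ n, ∫ ω, tr n ω * W ω ∂μ = ∫ ω, tr n ω * (μ[W|m]) ω ∂μ := fun n =>
    tower_bdd hm (htrm n) (htrW_int n) hW
  exact tendsto_nhds_unique (h1.congr fun n => h12 n) h2


lemma sm_comp {Ω E : Type*} [MeasurableSpace E] {X : Ω → E} {f : E → ℝ} (hf : Measurable f) :
    StronglyMeasurable[MeasurableSpace.comap X inferInstance] (fun ω => f (X ω)) :=
  (hf.comp (Measurable.of_comap_le le_rfl)).stronglyMeasurable

end helpers


/-- The efficient influence function has mean zero under the true distribution:
`E[φ_t(P)(X,T,Y)] = 0`, equivalently `E[ν_t(P)(X,T,Y)] = ψ_t(P)`. -/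
theorem eif_mean_zero
    {Ω : Type*} [MeasurableSpace Ω] (P : Measure Ω) [IsProbabilityMeasure P]
    {p : ℕ} (X : Ω → (Fin p → ℝ)) (T : Ω → ℝ) (Y : Ω → ℝ)
    (hX : Measurable X) (hT : Measurable T) (hY : Measurable Y)
    (hTval : ∀ ω, T ω = 0 ∨ T ω = 1)
    -- fixed treatment level `t ∈ {0,1}`
    (t : ℝ) (ht : t = 0 ∨ t = 1)
    -- tilting function and sensitivity parameter
    (s : ℝ → ℝ) (hs : Measurable s) (γ : ℝ)
    -- versions of the conditional treatment probabilities given `σ(X)`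
    (πt πs : (Fin p → ℝ) → ℝ) (hπt : Measurable πt) (hπs : Measurable πs)
    (hπtv : (fun ω => πt (X ω)) =ᵐ[P]
      P[(fun ω => if T ω = t then (1 : ℝ) else 0) | MeasurableSpace.comap X inferInstance])
    (hπsv : (fun ω => πs (X ω)) =ᵐ[P]
      P[(fun ω => if T ω = 1 - t then (1 : ℝ) else 0) | MeasurableSpace.comap X inferInstance])
    -- positivity
    (ε : ℝ) (hε : 0 < ε)
    (hpos : ∀ᵐ ω ∂P, ε ≤ πt (X ω) ∧ πt (X ω) ≤ 1 - ε)
    -- integrability assumptions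
    (hYInt : Integrable Y P)
    (hExpInt : Integrable (fun ω => Real.exp (γ * s (Y ω))) P)
    (hYExpInt : Integrable (fun ω => Y ω * Real.exp (γ * s (Y ω))) P)
    -- versions of the conditional means `μ_t(g(Y); X) = E[g(Y)1{T=t}|σ(X)]/π_t(X)`
    (muY muE muYE : (Fin p → ℝ) → ℝ)
    (hmuYm : Measurable muY) (hmuEm : Measurable muE) (hmuYEm : Measurable muYE)
    (hmuY : (fun ω => muY (X ω)) =ᵐ[P] fun ω =>
      (P[(fun ω => Y ω * (if T ω = t then (1 : ℝ) else 0)) |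
        MeasurableSpace.comap X inferInstance]) ω / πt (X ω))
    (hmuE : (fun ω => muE (X ω)) =ᵐ[P] fun ω =>
      (P[(fun ω => Real.exp (γ * s (Y ω)) * (if T ω = t then (1 : ℝ) else 0)) |
        MeasurableSpace.comap X inferInstance]) ω / πt (X ω))
    (hmuYE : (fun ω => muYE (X ω)) =ᵐ[P] fun ω =>
      (P[(fun ω => Y ω * Real.exp (γ * s (Y ω)) * (if T ω = t then (1 : ℝ) else 0)) |
        MeasurableSpace.comap X inferInstance]) ω / πt (X ω))
    -- `μ₁(X) ≥ ε` a.s.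
    (hmuEpos : ∀ᵐ ω ∂P, ε ≤ muE (X ω)) :
    -- `E[ν_t(P)(X,T,Y)] = ψ_t(P)`, i.e. the efficient influence function has mean zero
    ∫ ω, ((if T ω = t then (1 : ℝ) else 0) *
          (Y ω + Y ω * Real.exp (γ * s (Y ω)) * πs (X ω) / (πt (X ω) * muE (X ω))
            - Real.exp (γ * s (Y ω)) * πs (X ω) * muYE (X ω) / (πt (X ω) * muE (X ω) ^ 2))
        + (if T ω = 1 - t then (1 : ℝ) else 0) * (muYE (X ω) / muE (X ω))) ∂P =
      ∫ ω, (muY (X ω) * πt (X ω) + (muYE (X ω) / muE (X ω)) * πs (X ω)) ∂P := by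
  have hm : MeasurableSpace.comap X inferInstance ≤ ‹MeasurableSpace Ω› := hX.comap_le
  -- measurability of the basic random variables
  have hItm : Measurable (fun ω => if T ω = t then (1:ℝ) else 0) :=
    Measurable.ite (hT (measurableSet_singleton t)) measurable_const measurable_const
  have hIsm : Measurable (fun ω => if T ω = 1 - t then (1:ℝ) else 0) :=
    Measurable.ite (hT (measurableSet_singleton (1 - t))) measurable_const measurable_const
  have hIt01 : ∀ ω, ‖(if T ω = t then (1:ℝ) else 0)‖ ≤ 1 := by
    intro ω; split <;> simp
  have hIs01 : ∀ ω, ‖(if T ω = 1 - t then (1:ℝ) else 0)‖ ≤ 1 := by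
    intro ω; split <;> simp
  -- integrability of products with the indicators
  have hIsInt : Integrable (fun ω => if T ω = 1 - t then (1:ℝ) else 0) P :=
    ⟨hIsm.aestronglyMeasurable, HasFiniteIntegral.of_bounded (C := 1)
      (Filter.Eventually.of_forall hIs01)⟩
  have hYIt : Integrable (fun ω => Y ω * (if T ω = t then (1:ℝ) else 0)) P :=
    int_mul_bdd hYInt hItm.aestronglyMeasurable (Filter.Eventually.of_forall hIt01)
  have hEIt : Integrable (fun ω => Real.exp (γ * s (Y ω)) * (if T ω = t then (1:ℝ) else 0)) P :=
    int_mul_bdd hExpInt hItm.aestronglyMeasurable (Filter.Eventually.of_forall hIt01)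
  have hYEIt : Integrable
      (fun ω => Y ω * Real.exp (γ * s (Y ω)) * (if T ω = t then (1:ℝ) else 0)) P :=
    int_mul_bdd hYExpInt hItm.aestronglyMeasurable (Filter.Eventually.of_forall hIt01)
  -- a.e. positivity facts
  have hπtpos : ∀ᵐ ω ∂P, 0 < πt (X ω) := by
    filter_upwards [hpos] with ω h using lt_of_lt_of_le hε h.1
  have hmuE0 : ∀ᵐ ω ∂P, 0 < muE (X ω) := by
    filter_upwards [hmuEpos] with ω h using lt_of_lt_of_le hε h
  -- a.e. bounds for `πs ∘ X`
  have hπsb : ∀ᵐ ω ∂P, 0 ≤ πs (X ω) ∧ πs (X ω) ≤ 1 := by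
    have h0 : (0 : Ω → ℝ) ≤ᵐ[P]
        P[(fun ω => if T ω = 1 - t then (1:ℝ) else 0) | MeasurableSpace.comap X inferInstance] :=
      condExp_nonneg (Filter.Eventually.of_forall fun ω => by
        simp only [Pi.zero_apply]; split <;> norm_num)
    have h1 : P[(fun ω => if T ω = 1 - t then (1:ℝ) else 0) |
        MeasurableSpace.comap X inferInstance] ≤ᵐ[P] fun _ => (1:ℝ) := by
      have h2 := condExp_mono (m := MeasurableSpace.comap X inferInstance) (μ := P)
        hIsInt (integrable_const (1:ℝ))
        (Filter.Eventually.of_forall fun ω => by dsimp only; split <;> norm_num)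
      rwa [condExp_const hm (1:ℝ)] at h2
    filter_upwards [hπsv, h0, h1] with ω he h0ω h1ω
    exact ⟨le_trans h0ω (le_of_eq he.symm), le_trans (le_of_eq he) h1ω⟩
  -- conditional-expectation identities
  have hc1 : (fun ω => muY (X ω) * πt (X ω)) =ᵐ[P]
      P[(fun ω => Y ω * (if T ω = t then (1:ℝ) else 0)) |
        MeasurableSpace.comap X inferInstance] := by
    filter_upwards [hmuY, hπtpos] with ω h1 h2
    rw [h1]; exact div_mul_cancel₀ _ (ne_of_gt h2)
  have hcE : (fun ω => muE (X ω) * πt (X ω)) =ᵐ[P]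
      P[(fun ω => Real.exp (γ * s (Y ω)) * (if T ω = t then (1:ℝ) else 0)) |
        MeasurableSpace.comap X inferInstance] := by
    filter_upwards [hmuE, hπtpos] with ω h1 h2
    rw [h1]; exact div_mul_cancel₀ _ (ne_of_gt h2)
  have hcYE : (fun ω => muYE (X ω) * πt (X ω)) =ᵐ[P]
      P[(fun ω => Y ω * Real.exp (γ * s (Y ω)) * (if T ω = t then (1:ℝ) else 0)) |
        MeasurableSpace.comap X inferInstance] := by
    filter_upwards [hmuYE, hπtpos] with ω h1 h2
    rw [h1]; exact div_mul_cancel₀ _ (ne_of_gt h2)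
  -- integrability of `muYE ∘ X` and `muYE/muE ∘ X`
  have hmuYEXint : Integrable (fun ω => muYE (X ω)) P := by
    refine Integrable.mono'
      ((integrable_condExp (m := MeasurableSpace.comap X inferInstance) (μ := P)
        (f := fun ω => Y ω * Real.exp (γ * s (Y ω)) * (if T ω = t then (1:ℝ) else 0))).abs.const_mul
        (1/ε))
      (hmuYEm.comp hX).aestronglyMeasurable ?_
    filter_upwards [hmuYE, hπtpos, hpos] with ω h1 h2 h3
    rw [Real.norm_eq_abs, h1, abs_div, abs_of_pos h2, div_eq_mul_inv, one_div, mul_comm (ε⁻¹)]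
    exact mul_le_mul_of_nonneg_left (inv_anti₀ hε h3.1) (abs_nonneg _)
  have hf4Xint : Integrable (fun ω => muYE (X ω) / muE (X ω)) P := by
    refine Integrable.mono' (hmuYEXint.abs.const_mul (1/ε))
      ((hmuYEm.comp hX).div (hmuEm.comp hX)).aestronglyMeasurable ?_
    filter_upwards [hmuEpos, hmuE0] with ω h1 h2
    rw [Real.norm_eq_abs, abs_div, abs_of_pos h2, div_eq_mul_inv, one_div, mul_comm (ε⁻¹)]
    exact mul_le_mul_of_nonneg_left (inv_anti₀ hε h1) (abs_nonneg _)
  -- term 1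
  have I1 : ∫ ω, Y ω * (if T ω = t then (1:ℝ) else 0) ∂P
      = ∫ ω, muY (X ω) * πt (X ω) ∂P :=
    calc ∫ ω, Y ω * (if T ω = t then (1:ℝ) else 0) ∂P
        = ∫ ω, (P[(fun ω => Y ω * (if T ω = t then (1:ℝ) else 0)) |
            MeasurableSpace.comap X inferInstance]) ω ∂P := (integral_condExp hm).symm
      _ = _ := integral_congr_ae hc1.symm
  -- term 2
  have hf2m : Measurable (fun x => πs x / (πt x * muE x)) := hπs.div (hπt.mul hmuEm)
  have hf2b : ∀ᵐ ω ∂P, ‖πs (X ω) / (πt (X ω) * muE (X ω))‖ ≤ 1/ε^2 := by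
    filter_upwards [hπsb, hpos, hmuEpos] with ω h1 h2 h3
    have hp : 0 < πt (X ω) * muE (X ω) :=
      mul_pos (lt_of_lt_of_le hε h2.1) (lt_of_lt_of_le hε h3)
    rw [Real.norm_eq_abs, abs_div, abs_of_nonneg h1.1, abs_of_pos hp, sq]
    exact div_le_div₀ (by norm_num) h1.2 (mul_pos hε hε)
      (mul_le_mul h2.1 h3 hε.le (le_trans hε.le h2.1))
  have hI2int : Integrable (fun ω => πs (X ω) / (πt (X ω) * muE (X ω)) *
      (Y ω * Real.exp (γ * s (Y ω)) * (if T ω = t then (1:ℝ) else 0))) P :=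
    hYEIt.bdd_mul (hf2m.comp hX).aestronglyMeasurable hf2b
  have I2 : ∫ ω, πs (X ω) / (πt (X ω) * muE (X ω)) *
        (Y ω * Real.exp (γ * s (Y ω)) * (if T ω = t then (1:ℝ) else 0)) ∂P
      = ∫ ω, πs (X ω) * muYE (X ω) / muE (X ω) ∂P :=
    calc ∫ ω, πs (X ω) / (πt (X ω) * muE (X ω)) *
        (Y ω * Real.exp (γ * s (Y ω)) * (if T ω = t then (1:ℝ) else 0)) ∂P
        = ∫ ω, πs (X ω) / (πt (X ω) * muE (X ω)) *
          (P[(fun ω => Y ω * Real.exp (γ * s (Y ω)) * (if T ω = t then (1:ℝ) else 0)) |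
            MeasurableSpace.comap X inferInstance]) ω ∂P :=
        tower_bdd hm (sm_comp hf2m) hI2int hYEIt
      _ = _ := by
        refine integral_congr_ae ?_
        filter_upwards [hcYE, hπtpos, hmuE0] with ω h1 h2 h3
        rw [← h1]
        field_simp
  -- term 3
  have hf3m : Measurable (fun x => πs x * muYE x / (πt x * muE x ^ 2)) :=
    (hπs.mul hmuYEm).div (hπt.mul (hmuEm.pow_const 2))
  have hEIt0 : (0 : Ω → ℝ) ≤ᵐ[P]
      fun ω => Real.exp (γ * s (Y ω)) * (if T ω = t then (1:ℝ) else 0) :=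
    Filter.Eventually.of_forall fun ω => by
      simp only [Pi.zero_apply]
      exact mul_nonneg (Real.exp_pos _).le (by split <;> norm_num)
  have hint3 : Integrable (fun ω => |πs (X ω) * muYE (X ω) / (πt (X ω) * muE (X ω) ^ 2)| *
      (P[(fun ω => Real.exp (γ * s (Y ω)) * (if T ω = t then (1:ℝ) else 0)) |
        MeasurableSpace.comap X inferInstance]) ω) P := by
    refine Integrable.mono' (hmuYEXint.abs.const_mul (1/ε))
      ((hf3m.comp hX).abs.aestronglyMeasurable.mul integrable_condExp.aestronglyMeasurable) ?_
    filter_upwards [hcE, hπsb, hπtpos, hmuE0, hmuEpos] with ω h1 h2 h3 h4 h6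
    rw [Real.norm_eq_abs, ← h1]
    have habs : |πs (X ω) * muYE (X ω) / (πt (X ω) * muE (X ω) ^ 2)| =
        πs (X ω) * |muYE (X ω)| / (πt (X ω) * muE (X ω) ^ 2) := by
      rw [abs_div, abs_mul, abs_of_nonneg h2.1, abs_of_pos (mul_pos h3 (pow_pos h4 2))]
    rw [habs, abs_of_nonneg (mul_nonneg (div_nonneg (mul_nonneg h2.1 (abs_nonneg _))
      (mul_pos h3 (pow_pos h4 2)).le) (mul_pos h4 h3).le)]
    have heq : πs (X ω) * |muYE (X ω)| / (πt (X ω) * muE (X ω) ^ 2) *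
        (muE (X ω) * πt (X ω)) = πs (X ω) * |muYE (X ω)| / muE (X ω) := by
      field_simp
    rw [heq, div_le_iff₀ h4]
    have h1ε : 1 ≤ 1/ε * muE (X ω) := by
      rw [one_div, inv_mul_eq_div, le_div_iff₀ hε]
      linarith
    nlinarith [abs_nonneg (muYE (X ω)),
      mul_le_mul_of_nonneg_right h2.2 (abs_nonneg (muYE (X ω))),
      mul_le_mul_of_nonneg_left h1ε (abs_nonneg (muYE (X ω)))]
  have hI3 := tower_nonneg hm (sm_comp hf3m) hEIt hEIt0 hint3
  have hI3int : Integrable (fun ω => πs (X ω) * muYE (X ω) / (πt (X ω) * muE (X ω) ^ 2) *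
      (Real.exp (γ * s (Y ω)) * (if T ω = t then (1:ℝ) else 0))) P := hI3.1
  have I3 : ∫ ω, πs (X ω) * muYE (X ω) / (πt (X ω) * muE (X ω) ^ 2) *
        (Real.exp (γ * s (Y ω)) * (if T ω = t then (1:ℝ) else 0)) ∂P
      = ∫ ω, πs (X ω) * muYE (X ω) / muE (X ω) ∂P := by
    refine hI3.2.trans (integral_congr_ae ?_)
    filter_upwards [hcE, hπtpos, hmuE0] with ω h1 h2 h3
    rw [← h1]
    field_simp
  -- term 4
  have hI4int : Integrable
      (fun ω => muYE (X ω) / muE (X ω) * (if T ω = 1 - t then (1:ℝ) else 0)) P :=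
    int_mul_bdd hf4Xint hIsm.aestronglyMeasurable (Filter.Eventually.of_forall hIs01)
  have I4 : ∫ ω, muYE (X ω) / muE (X ω) * (if T ω = 1 - t then (1:ℝ) else 0) ∂P
      = ∫ ω, muYE (X ω) / muE (X ω) * πs (X ω) ∂P :=
    calc ∫ ω, muYE (X ω) / muE (X ω) * (if T ω = 1 - t then (1:ℝ) else 0) ∂P
        = ∫ ω, muYE (X ω) / muE (X ω) * (P[(fun ω => if T ω = 1 - t then (1:ℝ) else 0) |
            MeasurableSpace.comap X inferInstance]) ω ∂P :=
        tower_bdd hm (sm_comp (hmuYEm.div hmuEm)) hI4int hIsInt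
      _ = _ := integral_congr_ae (by
          filter_upwards [hπsv] with ω h
          rw [← h])
  -- integrability of the right-hand side terms
  have hR1int : Integrable (fun ω => muY (X ω) * πt (X ω)) P := integrable_condExp.congr hc1.symm
  have hR2int : Integrable (fun ω => muYE (X ω) / muE (X ω) * πs (X ω)) P :=
    int_mul_bdd hf4Xint (hπs.comp hX).aestronglyMeasurable (by
      filter_upwards [hπsb] with ω h
      rw [Real.norm_eq_abs, abs_of_nonneg h.1]
      exact h.2)
  -- pointwise decomposition of the integrand
  have hsplit : (fun ω => ((if T ω = t then (1 : ℝ) else 0) *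
          (Y ω + Y ω * Real.exp (γ * s (Y ω)) * πs (X ω) / (πt (X ω) * muE (X ω))
            - Real.exp (γ * s (Y ω)) * πs (X ω) * muYE (X ω) / (πt (X ω) * muE (X ω) ^ 2))
        + (if T ω = 1 - t then (1 : ℝ) else 0) * (muYE (X ω) / muE (X ω))))
      = fun ω => Y ω * (if T ω = t then (1:ℝ) else 0)
          + πs (X ω) / (πt (X ω) * muE (X ω)) *
            (Y ω * Real.exp (γ * s (Y ω)) * (if T ω = t then (1:ℝ) else 0))
          - πs (X ω) * muYE (X ω) / (πt (X ω) * muE (X ω) ^ 2) *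
            (Real.exp (γ * s (Y ω)) * (if T ω = t then (1:ℝ) else 0))
          + muYE (X ω) / muE (X ω) * (if T ω = 1 - t then (1:ℝ) else 0) := by
    funext ω; ring
  have hAB : Integrable (fun ω => Y ω * (if T ω = t then (1:ℝ) else 0)
      + πs (X ω) / (πt (X ω) * muE (X ω)) *
        (Y ω * Real.exp (γ * s (Y ω)) * (if T ω = t then (1:ℝ) else 0))) P := by
    exact hYIt.add hI2int
  have hABC : Integrable (fun ω => Y ω * (if T ω = t then (1:ℝ) else 0)
      + πs (X ω) / (πt (X ω) * muE (X ω)) *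
        (Y ω * Real.exp (γ * s (Y ω)) * (if T ω = t then (1:ℝ) else 0))
      - πs (X ω) * muYE (X ω) / (πt (X ω) * muE (X ω) ^ 2) *
        (Real.exp (γ * s (Y ω)) * (if T ω = t then (1:ℝ) else 0))) P := by
    exact hAB.sub hI3int
  rw [hsplit, integral_add hABC hI4int, integral_sub hAB hI3int, integral_add hYIt hI2int,
    integral_add hR1int hR2int, I1, I2, I3, I4]
  ring
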